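/- (Homogeneous relations with the zero-level elements.) Under the exchange relation for the block matrix M and invertibility of M12: for every k ≥ 0, R_{n₂}·(T⁻₁ ⊠ T⁺_k) = (T⁻₁ ⊠' T⁺_k)·R_{n₁} and R_{n₂}·(T⁺_k ⊠ T⁺₀) = (T⁺_k ⊠' T⁺₀)·R_{n₁}; and for every k ≥ 1, R_{n₂}·(T⁻₁ ⊠ T⁻_k) = (T⁻₁ ⊠' T⁻_k)·R_{n₁} and R_{n₂}·(T⁻_k ⊠ T⁺₀) = (T⁻_k ⊠' T⁺₀)·R_{n₁}. -/

import Mathlib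

open Matrix

variable {A : Type*} [Ring A]

/-- Kulish–Sklyanin trigonometric R-matrix with deformation parameter `q`
(`qi` denotes the inverse of `q`). -/
def Rmat (A : Type*) [Ring A] (q qi : A) (n : ℕ) :
    Matrix (Fin n × Fin n) (Fin n × Fin n) A := fun x y =>
  if x.1 = x.2 ∧ x.2 = y.1 ∧ y.1 = y.2 then q
  else if x.1 = y.1 ∧ x.2 = y.2 then 1
  else if x.1 = y.2 ∧ x.2 = y.1 ∧ x.2 < x.1 then q - qi
  else 0

/-- Permutation-type matrix with (possibly) rectangular tensor indices. -/
def PmatG (A : Type*) [Ring A] (m n : ℕ) :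
    Matrix (Fin m × Fin n) (Fin n × Fin m) A := fun x y =>
  if x.1 = y.2 ∧ x.2 = y.1 then 1 else 0

/-- The permutation matrix `P`. -/
def Pmat (A : Type*) [Ring A] (n : ℕ) :
    Matrix (Fin n × Fin n) (Fin n × Fin n) A := PmatG A n n

/-- Kronecker product `X ⊠ Y` : entry at `((i,a),(j,b))` is `X i j * Y a b`. -/
def kron {I J K L : Type*} (X : Matrix I J A) (Y : Matrix K L A) :
    Matrix (I × K) (J × L) A := fun p r => X p.1 r.1 * Y p.2 r.2

/-- Opposite-order Kronecker product `X ⊠' Y` : entry at `((i,a),(j,b))` is `Y a b * X i j`. -/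
def kron' {I J K L : Type*} (X : Matrix I J A) (Y : Matrix K L A) :
    Matrix (I × K) (J × L) A := fun p r => Y p.2 r.2 * X p.1 r.1

/-- Positive-level transport matrices: `T⁺₀ = M21`, `T⁺_k = M22 · M12^(k-1) · M11` for `k ≥ 1`. -/
def Tpos {m n₁ n₂ : ℕ} (M11 : Matrix (Fin m) (Fin n₁) A) (M12 : Matrix (Fin m) (Fin m) A)
    (M21 : Matrix (Fin n₂) (Fin n₁) A) (M22 : Matrix (Fin n₂) (Fin m) A) :
    ℕ → Matrix (Fin n₂) (Fin n₁) A
  | 0 => M21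
  | k + 1 => M22 * M12 ^ k * M11

/-- Negative-level transport matrices, where `N` is the inverse of `M12`:
`T⁻₀ = 0`, `T⁻₁ = M22·N·M11 − M21`, `T⁻_k = M22·N^k·M11` for `k ≥ 2`. -/
def Tneg {m n₁ n₂ : ℕ} (M11 : Matrix (Fin m) (Fin n₁) A) (N : Matrix (Fin m) (Fin m) A)
    (M21 : Matrix (Fin n₂) (Fin n₁) A) (M22 : Matrix (Fin n₂) (Fin m) A) :
    ℕ → Matrix (Fin n₂) (Fin n₁) A
  | 0 => 0
  | 1 => M22 * N * M11 - M21
  | k + 2 => M22 * N ^ (k + 2) * M11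


lemma Rmat_row (q qi : A) (n : ℕ) (p y : Fin n × Fin n) :
    Rmat A q qi n p y =
      (if y = p then (if p.1 = p.2 then q else 1) else 0) +
      (if p.2 < p.1 ∧ y = (p.2, p.1) then q - qi else 0) := by
  obtain ⟨x1, x2⟩ := p
  obtain ⟨y1, y2⟩ := y
  simp only [Rmat, Prod.mk.injEq]
  split_ifs <;> first | rfl | (exfalso; omega) | simp

lemma Rmat_mul (q qi : A) {n : ℕ} {C : Type*} (X : Matrix (Fin n × Fin n) C A)
    (p : Fin n × Fin n) (r : C) :
    (Rmat A q qi n * X) p r =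
      (if p.1 = p.2 then q else 1) * X p r +
      (if p.2 < p.1 then (q - qi) * X (p.2, p.1) r else 0) := by
  rw [mul_apply]
  have key : ∀ y, Rmat A q qi n p y * X y r =
      (if y = p then (if p.1 = p.2 then q else 1) * X y r else 0) +
      (if p.2 < p.1 ∧ y = (p.2, p.1) then (q - qi) * X y r else 0) := by
    intro y
    rw [Rmat_row, add_mul]
    congr 1 <;> (split_ifs <;> simp)
  simp only [key, Finset.sum_add_distrib]
  congr 1
  · rw [Finset.sum_ite_eq' Finset.univ p fun y => (if p.1 = p.2 then q else 1) * X y r]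
    simp
  · by_cases h : p.2 < p.1
    · simp only [h, true_and]
      rw [Finset.sum_ite_eq' Finset.univ (p.2, p.1) fun y => (q - qi) * X y r]
      simp
    · simp [h]

lemma Rmat_col (q qi : A) (n : ℕ) (c r : Fin n × Fin n) :
    Rmat A q qi n c r =
      (if c = r then (if r.1 = r.2 then q else 1) else 0) +
      (if r.1 < r.2 ∧ c = (r.2, r.1) then q - qi else 0) := by
  obtain ⟨x1, x2⟩ := c
  obtain ⟨y1, y2⟩ := r
  simp only [Rmat, Prod.mk.injEq]
  split_ifs <;> first | rfl | (exfalso; omega) | simp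

lemma mul_Rmat (q qi : A) {n : ℕ} {C : Type*} (X : Matrix C (Fin n × Fin n) A)
    (p : C) (r : Fin n × Fin n) :
    (X * Rmat A q qi n) p r =
      X p r * (if r.1 = r.2 then q else 1) +
      (if r.1 < r.2 then X p (r.2, r.1) * (q - qi) else 0) := by
  rw [mul_apply]
  have key : ∀ c, X p c * Rmat A q qi n c r =
      (if c = r then X p c * (if r.1 = r.2 then q else 1) else 0) +
      (if r.1 < r.2 ∧ c = (r.2, r.1) then X p c * (q - qi) else 0) := by
    intro c
    rw [Rmat_col, mul_add]
    congr 1 <;> (split_ifs <;> simp)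
  simp only [key, Finset.sum_add_distrib]
  congr 1
  · rw [Finset.sum_ite_eq' Finset.univ r fun c => X p c * (if r.1 = r.2 then q else 1)]
    simp
  · by_cases h : r.1 < r.2
    · simp only [h, true_and]
      rw [Finset.sum_ite_eq' Finset.univ (r.2, r.1) fun c => X p c * (q - qi)]
      simp
    · simp [h]

lemma Rmat_mul_Rmat (q qi : A) (h : q * qi = 1) (n : ℕ) :
    Rmat A q qi n * Rmat A qi q n = 1 := by
  ext ⟨x, y⟩ ⟨u, v⟩
  rw [Rmat_mul]
  simp only [Rmat, one_apply, Prod.mk.injEq]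
  split_ifs <;> first | rfl | (exfalso; omega) | simp [h] | (exfalso; simp_all) | noncomm_ring



lemma kron_mul_kron {I J J' K L L' : Type*} [Fintype J] [Fintype L]
    (X : Matrix I J A) (Y : Matrix K L A) (X' : Matrix J J' A) (Y' : Matrix L L' A)
    (h : ∀ a b i j, Commute (Y a b) (X' i j)) :
    kron X Y * kron X' Y' = kron (X * X') (Y * Y') := by
  ext ⟨i, a⟩ ⟨j, b⟩
  show (∑ s : J × L, _) = (∑ l : J, X i l * X' l j) * (∑ c : L, Y a c * Y' c b)
  rw [Finset.sum_mul, Fintype.sum_prod_type]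
  refine Finset.sum_congr rfl fun l _ => ?_
  rw [Finset.mul_sum]
  refine Finset.sum_congr rfl fun c _ => ?_
  show X i l * Y a c * (X' l j * Y' c b) = X i l * X' l j * (Y a c * Y' c b)
  rw [mul_assoc, mul_assoc, ← mul_assoc (Y a c), (h a c l j).eq, mul_assoc]

lemma commute_one_entry {K : Type*} [DecidableEq K] (x : A) (a b : K) :
    Commute ((1 : Matrix K K A) a b) x := by
  by_cases h : a = b <;> simp [one_apply, h]

lemma kron_one_mul {I J J' K L : Type*} [Fintype J] [Fintype K] [DecidableEq K]
    (X : Matrix I J A) (X' : Matrix J J' A) (Y' : Matrix K L A) :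
    kron X (1 : Matrix K K A) * kron X' Y' = kron (X * X') Y' := by
  rw [kron_mul_kron _ _ _ _ (fun a b i j => commute_one_entry _ a b), Matrix.one_mul]

lemma mul_kron_one {I J K L L' : Type*} [Fintype J] [DecidableEq J] [Fintype L]
    (X : Matrix I J A) (Y : Matrix K L A) (Y' : Matrix L L' A) :
    kron X Y * kron (1 : Matrix J J A) Y' = kron X (Y * Y') := by
  rw [kron_mul_kron _ _ _ _ (fun a b i j => (commute_one_entry (Y a b) i j).symm),
    Matrix.mul_one]

lemma kron_split {I J K L : Type*} [Fintype J] [DecidableEq J] [Fintype K] [DecidableEq K]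
    (X : Matrix I J A) (Y : Matrix K L A) :
    kron X Y = kron X (1 : Matrix K K A) * kron (1 : Matrix J J A) Y := by
  rw [kron_one_mul, Matrix.mul_one]

lemma kron'_split {I J K L : Type*} [Fintype I] [DecidableEq I] [Fintype L] [DecidableEq L]
    (X : Matrix I J A) (Y : Matrix K L A) :
    kron' X Y = kron (1 : Matrix I I A) Y * kron X (1 : Matrix L L A) := by
  ext ⟨i, a⟩ ⟨j, b⟩
  show Y a b * X i j = ∑ s : I × L, _
  rw [Fintype.sum_prod_type]
  rw [Finset.sum_eq_single i]
  · show _ = ∑ c : L, (1 : Matrix I I A) i i * Y a c * (X i j * (1 : Matrix L L A) c b)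
    rw [Finset.sum_eq_single b]
    · simp [one_apply]
    · intro c _ hc
      simp [one_apply, hc]
    · simp
  · intro l _ hl
    show (∑ c : L, (1 : Matrix I I A) i l * Y a c * (X l j * (1 : Matrix L L A) c b)) = 0
    simp [one_apply, Ne.symm hl]
  · simp

lemma kron_one_one {I K : Type*} [DecidableEq I] [DecidableEq K] :
    kron (1 : Matrix I I A) (1 : Matrix K K A) = (1 : Matrix (I × K) (I × K) A) := by
  ext ⟨i, a⟩ ⟨j, b⟩
  show (1 : Matrix I I A) i j * (1 : Matrix K K A) a b = _
  by_cases h1 : i = j <;> by_cases h2 : a = b <;>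
    simp [one_apply, h1, h2, Prod.ext_iff]


lemma PmatG_mul {m n : ℕ} {C : Type*} (X : Matrix (Fin n × Fin m) C A)
    (p : Fin m × Fin n) (r : C) :
    (PmatG A m n * X) p r = X (p.2, p.1) r := by
  rw [mul_apply, Finset.sum_eq_single (p.2, p.1)]
  · simp [PmatG]
  · intro c _ hc
    obtain ⟨c1, c2⟩ := c
    have : ¬(p.1 = c2 ∧ p.2 = c1) := by
      rintro ⟨rfl, rfl⟩; exact hc rfl
    simp [PmatG, this]
  · simp

lemma mul_PmatG {m n : ℕ} {C : Type*} (X : Matrix C (Fin m × Fin n) A)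
    (p : C) (r : Fin n × Fin m) :
    (X * PmatG A m n) p r = X p (r.2, r.1) := by
  rw [mul_apply, Finset.sum_eq_single (r.2, r.1)]
  · simp [PmatG]
  · intro c _ hc
    obtain ⟨c1, c2⟩ := c
    have : ¬(c1 = r.2 ∧ c2 = r.1) := by
      rintro ⟨rfl, rfl⟩; exact hc rfl
    simp [PmatG, this]
  · simp

-- order/eq facts for the canonical sum embeddings
lemma fsf_lt_inl_inr {m n : ℕ} (a : Fin m) (b : Fin n) :
    finSumFinEquiv (Sum.inl a) < finSumFinEquiv (Sum.inr b : Fin m ⊕ Fin n) := by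
  have := a.isLt
  simp only [finSumFinEquiv_apply_left, finSumFinEquiv_apply_right, Fin.lt_def,
    Fin.coe_castAdd, Fin.coe_natAdd]
  omega

lemma fsf_not_lt_inr_inl {m n : ℕ} (a : Fin m) (b : Fin n) :
    ¬ finSumFinEquiv (Sum.inr b : Fin m ⊕ Fin n) < finSumFinEquiv (Sum.inl a) := by
  have := a.isLt
  simp only [finSumFinEquiv_apply_left, finSumFinEquiv_apply_right, Fin.lt_def,
    Fin.coe_castAdd, Fin.coe_natAdd]
  omega

lemma fsf_lt_inl_inl {m n : ℕ} (a b : Fin m) :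
    (finSumFinEquiv (Sum.inl a : Fin m ⊕ Fin n) < finSumFinEquiv (Sum.inl b)) ↔ a < b := by
  simp only [finSumFinEquiv_apply_left, Fin.lt_def, Fin.coe_castAdd]

lemma fsf_lt_inr_inr {m n : ℕ} (a b : Fin n) :
    (finSumFinEquiv (Sum.inr a : Fin m ⊕ Fin n) < finSumFinEquiv (Sum.inr b)) ↔ a < b := by
  simp only [finSumFinEquiv_apply_right, Fin.lt_def, Fin.coe_natAdd]
  omega

lemma master_of_hex {m n₁ n₂ : ℕ} (q qi : A)
    (M11 : Matrix (Fin m) (Fin n₁) A) (M12 : Matrix (Fin m) (Fin m) A)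
    (M21 : Matrix (Fin n₂) (Fin n₁) A) (M22 : Matrix (Fin n₂) (Fin m) A)
    (hex : Rmat A q qi (m + n₂) *
        kron (Matrix.reindex finSumFinEquiv finSumFinEquiv (fromBlocks M11 M12 M21 M22))
          (Matrix.reindex finSumFinEquiv finSumFinEquiv (fromBlocks M11 M12 M21 M22)) =
      kron' (Matrix.reindex finSumFinEquiv finSumFinEquiv (fromBlocks M11 M12 M21 M22))
          (Matrix.reindex finSumFinEquiv finSumFinEquiv (fromBlocks M11 M12 M21 M22)) *
        Rmat A q qi (n₁ + m)) :
    ∀ (x y : Fin m ⊕ Fin n₂) (u v : Fin n₁ ⊕ Fin m),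
      (if x = y then q else 1) *
          (fromBlocks M11 M12 M21 M22 x u * fromBlocks M11 M12 M21 M22 y v) +
        (if finSumFinEquiv y < finSumFinEquiv x then
          (q - qi) * (fromBlocks M11 M12 M21 M22 y u * fromBlocks M11 M12 M21 M22 x v) else 0) =
      (fromBlocks M11 M12 M21 M22 y v * fromBlocks M11 M12 M21 M22 x u) *
          (if u = v then q else 1) +
        (if finSumFinEquiv u < finSumFinEquiv v then
          (fromBlocks M11 M12 M21 M22 y u * fromBlocks M11 M12 M21 M22 x v) * (q - qi) else 0) := by
  intro x y u v
  have h := congrFun (congrFun hex (finSumFinEquiv x, finSumFinEquiv y))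
    (finSumFinEquiv u, finSumFinEquiv v)
  rw [Rmat_mul, mul_Rmat] at h
  simpa [kron, kron', EmbeddingLike.apply_eq_iff_eq] using h

/-- Left-scalar G-type matrix. -/
def Gl {I J K L : Type*} (t : A) (X : Matrix K J A) (Y : Matrix I L A) :
    Matrix (I × K) (J × L) A := fun p r => t * (X p.2 r.1 * Y p.1 r.2)

/-- Right-scalar G-type matrix. -/
def Gr {I J K L : Type*} (t : A) (X : Matrix K J A) (Y : Matrix I L A) :
    Matrix (I × K) (J × L) A := fun p r => (X p.2 r.1 * Y p.1 r.2) * t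

def MasterRel (q qi : A) {m n₁ n₂ : ℕ}
    (M11 : Matrix (Fin m) (Fin n₁) A) (M12 : Matrix (Fin m) (Fin m) A)
    (M21 : Matrix (Fin n₂) (Fin n₁) A) (M22 : Matrix (Fin n₂) (Fin m) A) : Prop :=
  ∀ (x y : Fin m ⊕ Fin n₂) (u v : Fin n₁ ⊕ Fin m),
      (if x = y then q else 1) *
          (fromBlocks M11 M12 M21 M22 x u * fromBlocks M11 M12 M21 M22 y v) +
        (if finSumFinEquiv y < finSumFinEquiv x then
          (q - qi) * (fromBlocks M11 M12 M21 M22 y u * fromBlocks M11 M12 M21 M22 x v) else 0) =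
      (fromBlocks M11 M12 M21 M22 y v * fromBlocks M11 M12 M21 M22 x u) *
          (if u = v then q else 1) +
        (if finSumFinEquiv u < finSumFinEquiv v then
          (fromBlocks M11 M12 M21 M22 y u * fromBlocks M11 M12 M21 M22 x v) * (q - qi) else 0)

section rels
variable {m n₁ n₂ : ℕ} {q qi : A}
  {M11 : Matrix (Fin m) (Fin n₁) A} {M12 : Matrix (Fin m) (Fin m) A}
  {M21 : Matrix (Fin n₂) (Fin n₁) A} {M22 : Matrix (Fin n₂) (Fin m) A}

lemma rel_a (hM : MasterRel q qi M11 M12 M21 M22)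
    (hθ : ∀ a : A, Commute (q - qi) a) :
    ∀ x u y v, Commute (M21 x u) (M12 y v) := by
  intro x u y v
  have h := hM (.inr x) (.inl y) (.inl u) (.inr v)
  simp only [fromBlocks_apply₁₁, fromBlocks_apply₁₂, fromBlocks_apply₂₁, fromBlocks_apply₂₂,
    fsf_lt_inl_inr, fsf_not_lt_inr_inl, if_true, if_false, reduceCtorEq, ite_false, one_mul,
    mul_one] at h
  rw [(hθ (M11 y u * M22 x v)).eq] at h
  exact add_right_cancel h

lemma rel_c (hM : MasterRel q qi M11 M12 M21 M22) :
    kron M11 M21 = kron' M11 M21 * Rmat A q qi n₁ := by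
  ext ⟨x, y⟩ ⟨u, v⟩
  rw [mul_Rmat]
  have h := hM (.inl x) (.inr y) (.inl u) (.inl v)
  simp only [fromBlocks_apply₁₁, fromBlocks_apply₁₂, fromBlocks_apply₂₁, fromBlocks_apply₂₂,
    fsf_lt_inl_inl, fsf_not_lt_inr_inl, Sum.inl.injEq, reduceCtorEq, ite_false, one_mul] at h
  simpa [kron, kron'] using h

lemma rel_d (hM : MasterRel q qi M11 M12 M21 M22) :
    kron M21 M11 + Gl (q - qi) M11 M21 = kron' M21 M11 * Rmat A q qi n₁ := by
  ext ⟨x, y⟩ ⟨u, v⟩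
  rw [Matrix.add_apply, mul_Rmat]
  have h := hM (.inr x) (.inl y) (.inl u) (.inl v)
  simp only [fromBlocks_apply₁₁, fromBlocks_apply₁₂, fromBlocks_apply₂₁, fromBlocks_apply₂₂,
    fsf_lt_inl_inl, fsf_lt_inl_inr, Sum.inl.injEq, reduceCtorEq, ite_false, if_true,
    one_mul] at h
  simpa [kron, kron', Gl] using h

lemma rel_e (hM : MasterRel q qi M11 M12 M21 M22) :
    kron M12 M22 = kron' M12 M22 * Rmat A q qi m := by
  ext ⟨x, y⟩ ⟨u, v⟩
  rw [mul_Rmat]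
  have h := hM (.inl x) (.inr y) (.inr u) (.inr v)
  simp only [fromBlocks_apply₁₁, fromBlocks_apply₁₂, fromBlocks_apply₂₁, fromBlocks_apply₂₂,
    fsf_lt_inr_inr, fsf_not_lt_inr_inl, Sum.inr.injEq, reduceCtorEq, ite_false, one_mul] at h
  simpa [kron, kron'] using h

lemma rel_f (hM : MasterRel q qi M11 M12 M21 M22) :
    kron M22 M12 + Gl (q - qi) M12 M22 = kron' M22 M12 * Rmat A q qi m := by
  ext ⟨x, y⟩ ⟨u, v⟩
  rw [Matrix.add_apply, mul_Rmat]
  have h := hM (.inr x) (.inl y) (.inr u) (.inr v)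
  simp only [fromBlocks_apply₁₁, fromBlocks_apply₁₂, fromBlocks_apply₂₁, fromBlocks_apply₂₂,
    fsf_lt_inr_inr, fsf_lt_inl_inr, Sum.inr.injEq, reduceCtorEq, ite_false, if_true,
    one_mul] at h
  simpa [kron, kron', Gl] using h

lemma rel_g (hM : MasterRel q qi M11 M12 M21 M22) :
    kron M11 M22 = kron' M11 M22 + Gr (q - qi) M21 M12 := by
  ext ⟨x, y⟩ ⟨u, v⟩
  rw [Matrix.add_apply]
  have h := hM (.inl x) (.inr y) (.inl u) (.inr v)
  simp only [fromBlocks_apply₁₁, fromBlocks_apply₁₂, fromBlocks_apply₂₁, fromBlocks_apply₂₂,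
    fsf_lt_inl_inr, fsf_not_lt_inr_inl, reduceCtorEq, ite_false, if_true, one_mul,
    mul_one] at h
  simpa [kron, kron', Gr] using h

lemma rel_h (hM : MasterRel q qi M11 M12 M21 M22) :
    kron M22 M11 + Gl (q - qi) M12 M21 = kron' M22 M11 := by
  ext ⟨x, y⟩ ⟨u, v⟩
  rw [Matrix.add_apply]
  have h := hM (.inr x) (.inl y) (.inr u) (.inl v)
  simp only [fromBlocks_apply₁₁, fromBlocks_apply₁₂, fromBlocks_apply₂₁, fromBlocks_apply₂₂,
    fsf_lt_inl_inr, fsf_not_lt_inr_inl, reduceCtorEq, ite_false, if_true, one_mul,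
    mul_one] at h
  simpa [kron, kron', Gl] using h

lemma rel_i (hM : MasterRel q qi M11 M12 M21 M22) :
    Rmat A q qi n₂ * kron M22 M21 = kron' M22 M21 := by
  ext ⟨x, y⟩ ⟨u, v⟩
  rw [Rmat_mul]
  have h := hM (.inr x) (.inr y) (.inr u) (.inl v)
  simp only [fromBlocks_apply₁₁, fromBlocks_apply₁₂, fromBlocks_apply₂₁, fromBlocks_apply₂₂,
    fsf_lt_inr_inr, fsf_not_lt_inr_inl, Sum.inr.injEq, reduceCtorEq, ite_false,
    mul_one] at h
  simpa [kron, kron'] using h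

lemma rel_j (hM : MasterRel q qi M11 M12 M21 M22) :
    Rmat A q qi n₂ * kron M21 M22 = kron' M21 M22 + Gr (q - qi) M21 M22 := by
  ext ⟨x, y⟩ ⟨u, v⟩
  rw [Rmat_mul, Matrix.add_apply]
  have h := hM (.inr x) (.inr y) (.inl u) (.inr v)
  simp only [fromBlocks_apply₁₁, fromBlocks_apply₁₂, fromBlocks_apply₂₁, fromBlocks_apply₂₂,
    fsf_lt_inr_inr, fsf_lt_inl_inr, Sum.inr.injEq, reduceCtorEq, ite_false, if_true,
    mul_one] at h
  simpa [kron, kron', Gr] using h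

lemma rel_k (hM : MasterRel q qi M11 M12 M21 M22) :
    Rmat A q qi n₂ * kron M21 M21 = kron' M21 M21 * Rmat A q qi n₁ := by
  ext ⟨x, y⟩ ⟨u, v⟩
  rw [Rmat_mul, mul_Rmat]
  have h := hM (.inr x) (.inr y) (.inl u) (.inl v)
  simp only [fromBlocks_apply₁₁, fromBlocks_apply₁₂, fromBlocks_apply₂₁, fromBlocks_apply₂₂,
    fsf_lt_inr_inr, fsf_lt_inl_inl, Sum.inr.injEq, Sum.inl.injEq] at h
  simpa [kron, kron'] using h

lemma rel_l (hM : MasterRel q qi M11 M12 M21 M22) :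
    Rmat A q qi m * kron M12 M11 = kron' M12 M11 := by
  ext ⟨x, y⟩ ⟨u, v⟩
  rw [Rmat_mul]
  have h := hM (.inl x) (.inl y) (.inr u) (.inl v)
  simp only [fromBlocks_apply₁₁, fromBlocks_apply₁₂, fromBlocks_apply₂₁, fromBlocks_apply₂₂,
    fsf_lt_inl_inl, fsf_not_lt_inr_inl, Sum.inl.injEq, reduceCtorEq, ite_false,
    mul_one] at h
  simpa [kron, kron'] using h

lemma rel_m (hM : MasterRel q qi M11 M12 M21 M22) :
    Rmat A q qi m * kron M11 M12 = kron' M11 M12 + Gr (q - qi) M11 M12 := by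
  ext ⟨x, y⟩ ⟨u, v⟩
  rw [Rmat_mul, Matrix.add_apply]
  have h := hM (.inl x) (.inl y) (.inl u) (.inr v)
  simp only [fromBlocks_apply₁₁, fromBlocks_apply₁₂, fromBlocks_apply₂₁, fromBlocks_apply₂₂,
    fsf_lt_inl_inl, fsf_lt_inl_inr, Sum.inl.injEq, reduceCtorEq, ite_false, if_true,
    mul_one] at h
  simpa [kron, kron', Gr] using h

lemma rel_n11 (hM : MasterRel q qi M11 M12 M21 M22) :
    Rmat A q qi m * kron M11 M11 = kron' M11 M11 * Rmat A q qi n₁ := by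
  ext ⟨x, y⟩ ⟨u, v⟩
  rw [Rmat_mul, mul_Rmat]
  have h := hM (.inl x) (.inl y) (.inl u) (.inl v)
  simp only [fromBlocks_apply₁₁, fromBlocks_apply₁₂, fromBlocks_apply₂₁, fromBlocks_apply₂₂,
    fsf_lt_inl_inl, Sum.inl.injEq] at h
  simpa [kron, kron'] using h

lemma rel_n12 (hM : MasterRel q qi M11 M12 M21 M22) :
    Rmat A q qi m * kron M12 M12 = kron' M12 M12 * Rmat A q qi m := by
  ext ⟨x, y⟩ ⟨u, v⟩
  rw [Rmat_mul, mul_Rmat]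
  have h := hM (.inl x) (.inl y) (.inr u) (.inr v)
  simp only [fromBlocks_apply₁₁, fromBlocks_apply₁₂, fromBlocks_apply₂₁, fromBlocks_apply₂₂,
    fsf_lt_inl_inl, fsf_lt_inr_inr, Sum.inl.injEq, Sum.inr.injEq] at h
  simpa [kron, kron'] using h

lemma rel_n22 (hM : MasterRel q qi M11 M12 M21 M22) :
    Rmat A q qi n₂ * kron M22 M22 = kron' M22 M22 * Rmat A q qi m := by
  ext ⟨x, y⟩ ⟨u, v⟩
  rw [Rmat_mul, mul_Rmat]
  have h := hM (.inr x) (.inr y) (.inr u) (.inr v)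
  simp only [fromBlocks_apply₁₁, fromBlocks_apply₁₂, fromBlocks_apply₂₁, fromBlocks_apply₂₂,
    fsf_lt_inr_inr, Sum.inr.injEq] at h
  simpa [kron, kron'] using h

end rels

section comm
variable {m : ℕ}

/-- If a scalar commutes with all entries of `M12`, it commutes with all entries of
its two-sided inverse `N`. -/
lemma commute_inv_entries {a : A} {M12 N : Matrix (Fin m) (Fin m) A}
    (hN : M12 * N = 1) (hN' : N * M12 = 1)
    (h : ∀ i j, Commute a (M12 i j)) : ∀ i j, Commute a (N i j) := by
  have hD : Matrix.diagonal (fun _ : Fin m => a) * M12 = M12 * Matrix.diagonal fun _ => a := by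
    ext i j
    rw [Matrix.diagonal_mul, Matrix.mul_diagonal]
    exact (h i j).eq
  have h2 : N * Matrix.diagonal (fun _ : Fin m => a) = Matrix.diagonal (fun _ => a) * N := by
    calc N * Matrix.diagonal (fun _ => a)
        = N * Matrix.diagonal (fun _ => a) * (M12 * N) := by rw [hN, Matrix.mul_one]
      _ = N * (Matrix.diagonal (fun _ => a) * M12) * N := by
          rw [Matrix.mul_assoc, Matrix.mul_assoc, Matrix.mul_assoc]
      _ = N * (M12 * Matrix.diagonal (fun _ => a)) * N := by rw [hD]
      _ = (N * M12) * (Matrix.diagonal (fun _ => a) * N) := by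
          rw [Matrix.mul_assoc, Matrix.mul_assoc, Matrix.mul_assoc]
      _ = Matrix.diagonal (fun _ => a) * N := by rw [hN', Matrix.one_mul]
  intro i j
  have h3 := congrFun (congrFun h2 i) j
  rw [Matrix.mul_diagonal, Matrix.diagonal_mul] at h3
  exact h3.symm

lemma commute_mul_entries {a : A} {J K L : Type*} [Fintype K]
    {X : Matrix J K A} {Y : Matrix K L A}
    (hX : ∀ i j, Commute a (X i j)) (hY : ∀ i j, Commute a (Y i j)) :
    ∀ i j, Commute a ((X * Y) i j) := by
  intro i j
  rw [mul_apply]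
  exact Commute.sum_right _ _ _ fun k _ => (hX i k).mul_right (hY k j)

lemma commute_pow_entries {a : A} {X : Matrix (Fin m) (Fin m) A}
    (hX : ∀ i j, Commute a (X i j)) : ∀ (k : ℕ) i j, Commute a ((X ^ k) i j) := by
  intro k
  induction k with
  | zero =>
    intro i j
    rw [pow_zero]
    by_cases h : i = j <;> simp [Matrix.one_apply, h]
  | succ k ih =>
    intro i j
    rw [pow_succ]
    exact commute_mul_entries ih hX i j

end comm

lemma PmatG_PmatG {a b : ℕ} : PmatG A a b * PmatG A b a = (1 : Matrix (Fin a × Fin b) _ A) := by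
  ext p r
  rw [PmatG_mul]
  obtain ⟨p1, p2⟩ := p
  obtain ⟨r1, r2⟩ := r
  by_cases h1 : p1 = r1 <;> by_cases h2 : p2 = r2 <;>
    simp [PmatG, one_apply, Prod.ext_iff, h1, h2] <;> tauto

lemma PmatG_swap₁ {a a' b : ℕ} (X : Matrix (Fin a) (Fin a') A) :
    kron X (1 : Matrix (Fin b) (Fin b) A) * PmatG A a' b =
      PmatG A a b * kron (1 : Matrix (Fin b) (Fin b) A) X := by
  ext p r
  rw [mul_PmatG, PmatG_mul]
  show X p.1 r.2 * (1 : Matrix (Fin b) (Fin b) A) p.2 r.1 = (1 : Matrix _ _ A) p.2 r.1 * X p.1 r.2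
  by_cases h : p.2 = r.1 <;> simp [one_apply, h]

lemma Gl_eq {m' n' J L : Type*} [Fintype m'] [Fintype n'] (t : A)
    (X : Matrix m' J A) (Y : Matrix n' L A) :
    (Gl t X Y : Matrix (n' × m') (J × L) A) = t • ((fun p r => X p.2 r.1 * Y p.1 r.2 : Matrix (n' × m') (J × L) A)) := rfl

lemma Gl_eq_pmat {a b : ℕ} {J L : Type*} (t : A)
    (X : Matrix (Fin a) J A) (Y : Matrix (Fin b) L A) :
    (Gl t X Y : Matrix (Fin b × Fin a) (J × L) A) = t • (PmatG A b a * kron X Y) := by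
  ext p r
  rw [Matrix.smul_apply, PmatG_mul]
  rfl

lemma Gr_eq_Gl {I J K L : Type*} (t : A) (ht : ∀ a : A, Commute t a)
    (X : Matrix K J A) (Y : Matrix I L A) :
    (Gr t X Y : Matrix (I × K) (J × L) A) = Gl t X Y := by
  ext p r
  exact (ht (X p.2 r.1 * Y p.1 r.2)).eq.symm

lemma kron_sub_left {I J K L : Type*} (X X' : Matrix I J A) (Y : Matrix K L A) :
    kron (X - X') Y = kron X Y - kron X' Y := by
  ext p r
  show (X p.1 r.1 - X' p.1 r.1) * Y p.2 r.2 = _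
  rw [sub_mul]; rfl

lemma kron'_sub_left {I J K L : Type*} (X X' : Matrix I J A) (Y : Matrix K L A) :
    kron' (X - X') Y = kron' X Y - kron' X' Y := by
  ext p r
  show Y p.2 r.2 * (X p.1 r.1 - X' p.1 r.1) = _
  rw [mul_sub]; rfl

lemma kron_sub_right {I J K L : Type*} (X : Matrix I J A) (Y Y' : Matrix K L A) :
    kron X (Y - Y') = kron X Y - kron X Y' := by
  ext p r
  show X p.1 r.1 * (Y p.2 r.2 - Y' p.2 r.2) = _
  rw [mul_sub]; rfl

lemma kron'_sub_right {I J K L : Type*} (X : Matrix I J A) (Y Y' : Matrix K L A) :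
    kron' X (Y - Y') = kron' X Y - kron' X Y' := by
  ext p r
  show (Y p.2 r.2 - Y' p.2 r.2) * X p.1 r.1 = _
  rw [sub_mul]; rfl

lemma kron_comm_eq {I J K L : Type*} (X : Matrix I J A) (Y : Matrix K L A)
    (h : ∀ i j a b, Commute (X i j) (Y a b)) : kron X Y = kron' X Y := by
  ext p r
  exact (h p.1 r.1 p.2 r.2).eq

lemma Pdiamond (q qi : A) (n : ℕ) :
    Rmat A qi q n * PmatG A n n =
      PmatG A n n * Rmat A q qi n - (q - qi) • (1 : Matrix (Fin n × Fin n) _ A) := by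
  ext ⟨x, y⟩ ⟨u, v⟩
  rw [Rmat_mul]
  simp only [Matrix.sub_apply, Matrix.smul_apply, smul_eq_mul, PmatG_mul]
  simp only [Rmat, PmatG, one_apply, Prod.mk.injEq, Prod.ext_iff]
  split_ifs <;> first | rfl | (exfalso; omega) | noncomm_ring | simp | skip
  all_goals (try (exfalso; omega))
  all_goals noncomm_ring

lemma mul_smul_central {I J K : Type*} [Fintype J] (t : A) (ht : ∀ a : A, Commute t a)
    (M : Matrix I J A) (N : Matrix J K A) : M * (t • N) = t • (M * N) := by
  ext p r
  simp only [Matrix.smul_apply, mul_apply, smul_eq_mul, Finset.mul_sum]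
  refine Finset.sum_congr rfl fun c _ => ?_
  rw [← mul_assoc, (ht (M p c)).eq.symm, mul_assoc]

section PP
variable {m n₁ n₂ : ℕ} {q qi : A}
  {M11 : Matrix (Fin m) (Fin n₁) A} {M12 N : Matrix (Fin m) (Fin m) A}
  {M21 : Matrix (Fin n₂) (Fin n₁) A} {M22 : Matrix (Fin n₂) (Fin m) A}

lemma rg_lem (hθ : ∀ a : A, Commute (q - qi) a) (hqinv : q * qi = 1)
    (rm : Rmat A q qi m * kron M11 M12 = kron' M11 M12 + Gr (q - qi) M11 M12) :
    Rmat A qi q m * Gl (q - qi) M11 M12 =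
      (q - qi) • (PmatG A m m * kron' M11 M12) := by
  rw [Gl_eq_pmat, mul_smul_central _ hθ, ← Matrix.mul_assoc, Pdiamond q qi m,
    Matrix.sub_mul, Matrix.smul_mul, Matrix.one_mul, Matrix.mul_assoc, rm,
    Gr_eq_Gl _ hθ, Gl_eq_pmat, Matrix.mul_add, mul_smul_central _ hθ,
    ← Matrix.mul_assoc, PmatG_PmatG, Matrix.one_mul, smul_sub, smul_add]
  abel

lemma eg_lem (hqinv : q * qi = 1)
    (re : kron M12 M22 = kron' M12 M22 * Rmat A q qi m) :
    Gl (q - qi) M12 M22 * Rmat A qi q m =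
      (q - qi) • (PmatG A n₂ m * kron' M12 M22) := by
  rw [Gl_eq_pmat, Matrix.smul_mul, Matrix.mul_assoc, re, Matrix.mul_assoc,
    Rmat_mul_Rmat q qi hqinv, Matrix.mul_one]

end PP


section sig
variable {m n₁ n₂ : ℕ} {q qi : A}
  {M11 : Matrix (Fin m) (Fin n₁) A} {M12 N : Matrix (Fin m) (Fin m) A}
  {M22 : Matrix (Fin n₂) (Fin m) A}

lemma kron_invl {C : Type*} [Fintype C] [DecidableEq C] (hN' : N * M12 = 1) :
    kron N (1 : Matrix C C A) * kron M12 (1 : Matrix C C A) = 1 := by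
  rw [kron_one_mul, hN', kron_one_one]

lemma kron_invr {C : Type*} [Fintype C] [DecidableEq C] (hN : M12 * N = 1) :
    kron M12 (1 : Matrix C C A) * kron N (1 : Matrix C C A) = 1 := by
  rw [kron_one_mul, hN, kron_one_one]

lemma sigma1 (hqinv' : qi * q = 1) (hN : M12 * N = 1) (hN' : N * M12 = 1)
    (rl : Rmat A q qi m * kron M12 M11 = kron' M12 M11) :
    kron N (1 : Matrix (Fin m) (Fin m) A) *
        (Rmat A qi q m * kron (1 : Matrix (Fin m) (Fin m) A) M11) =
      kron (1 : Matrix (Fin m) (Fin m) A) M11 * kron N (1 : Matrix (Fin n₁) (Fin n₁) A) := by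
  have rl' : Rmat A q qi m * (kron M12 (1 : Matrix (Fin m) (Fin m) A) *
      kron (1 : Matrix (Fin m) (Fin m) A) M11) =
      kron (1 : Matrix (Fin m) (Fin m) A) M11 * kron M12 (1 : Matrix (Fin n₁) (Fin n₁) A) := by
    rw [← kron_split, rl, kron'_split]
  have step : Rmat A qi q m * (kron (1 : Matrix (Fin m) (Fin m) A) M11 *
      kron M12 (1 : Matrix (Fin n₁) (Fin n₁) A)) =
      kron M12 (1 : Matrix (Fin m) (Fin m) A) * kron (1 : Matrix (Fin m) (Fin m) A) M11 := by
    rw [← rl', ← Matrix.mul_assoc, Rmat_mul_Rmat qi q hqinv', Matrix.one_mul]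
  calc kron N (1 : Matrix (Fin m) (Fin m) A) *
        (Rmat A qi q m * kron (1 : Matrix (Fin m) (Fin m) A) M11)
      = kron N (1 : Matrix (Fin m) (Fin m) A) *
        (Rmat A qi q m * (kron (1 : Matrix (Fin m) (Fin m) A) M11 *
          (kron M12 (1 : Matrix (Fin n₁) (Fin n₁) A) *
            kron N (1 : Matrix (Fin n₁) (Fin n₁) A)))) := by
        rw [kron_invr hN, Matrix.mul_one]
    _ = kron N (1 : Matrix (Fin m) (Fin m) A) *
        (Rmat A qi q m * (kron (1 : Matrix (Fin m) (Fin m) A) M11 *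
          kron M12 (1 : Matrix (Fin n₁) (Fin n₁) A))) *
          kron N (1 : Matrix (Fin n₁) (Fin n₁) A) := by
        simp only [Matrix.mul_assoc]
    _ = kron N (1 : Matrix (Fin m) (Fin m) A) *
        (kron M12 (1 : Matrix (Fin m) (Fin m) A) * kron (1 : Matrix (Fin m) (Fin m) A) M11) *
          kron N (1 : Matrix (Fin n₁) (Fin n₁) A) := by rw [step]
    _ = (kron N (1 : Matrix (Fin m) (Fin m) A) * kron M12 (1 : Matrix (Fin m) (Fin m) A)) *
        (kron (1 : Matrix (Fin m) (Fin m) A) M11 * kron N (1 : Matrix (Fin n₁) (Fin n₁) A)) := by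
        simp only [Matrix.mul_assoc]
    _ = kron (1 : Matrix (Fin m) (Fin m) A) M11 * kron N (1 : Matrix (Fin n₁) (Fin n₁) A) := by
        rw [kron_invl hN', Matrix.one_mul]

lemma sigma2 (hqinv : q * qi = 1) (hN : M12 * N = 1) (hN' : N * M12 = 1)
    (re : kron M12 M22 = kron' M12 M22 * Rmat A q qi m) :
    kron (1 : Matrix (Fin m) (Fin m) A) M22 *
        (Rmat A qi q m * kron N (1 : Matrix (Fin m) (Fin m) A)) =
      kron N (1 : Matrix (Fin n₂) (Fin n₂) A) * kron (1 : Matrix (Fin m) (Fin m) A) M22 := by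
  have re' : kron M12 (1 : Matrix (Fin n₂) (Fin n₂) A) * kron (1 : Matrix (Fin m) (Fin m) A) M22 =
      kron (1 : Matrix (Fin m) (Fin m) A) M22 *
        (kron M12 (1 : Matrix (Fin m) (Fin m) A) * Rmat A q qi m) := by
    rw [← kron_split, re, kron'_split, Matrix.mul_assoc]
  have step : kron (1 : Matrix (Fin m) (Fin m) A) M22 =
      kron N (1 : Matrix (Fin n₂) (Fin n₂) A) * (kron (1 : Matrix (Fin m) (Fin m) A) M22 *
        (kron M12 (1 : Matrix (Fin m) (Fin m) A) * Rmat A q qi m)) := by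
    rw [← re', ← Matrix.mul_assoc, kron_invl hN', Matrix.one_mul]
  calc kron (1 : Matrix (Fin m) (Fin m) A) M22 *
        (Rmat A qi q m * kron N (1 : Matrix (Fin m) (Fin m) A))
      = kron N (1 : Matrix (Fin n₂) (Fin n₂) A) * (kron (1 : Matrix (Fin m) (Fin m) A) M22 *
          (kron M12 (1 : Matrix (Fin m) (Fin m) A) * Rmat A q qi m)) *
          (Rmat A qi q m * kron N (1 : Matrix (Fin m) (Fin m) A)) := by rw [← step]
    _ = kron N (1 : Matrix (Fin n₂) (Fin n₂) A) * (kron (1 : Matrix (Fin m) (Fin m) A) M22 *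
          (kron M12 (1 : Matrix (Fin m) (Fin m) A) *
            ((Rmat A q qi m * Rmat A qi q m) * kron N (1 : Matrix (Fin m) (Fin m) A)))) := by
        simp only [Matrix.mul_assoc]
    _ = kron N (1 : Matrix (Fin n₂) (Fin n₂) A) * (kron (1 : Matrix (Fin m) (Fin m) A) M22 *
          (kron M12 (1 : Matrix (Fin m) (Fin m) A) * kron N (1 : Matrix (Fin m) (Fin m) A))) := by
        rw [Rmat_mul_Rmat q qi hqinv, Matrix.one_mul]
    _ = kron N (1 : Matrix (Fin n₂) (Fin n₂) A) * kron (1 : Matrix (Fin m) (Fin m) A) M22 := by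
        rw [kron_invr hN, Matrix.mul_one]

lemma sigma3 (hqinv : q * qi = 1) (hqinv' : qi * q = 1) (hN : M12 * N = 1) (hN' : N * M12 = 1)
    (rn12 : Rmat A q qi m * kron M12 M12 = kron' M12 M12 * Rmat A q qi m) :
    kron N (1 : Matrix (Fin m) (Fin m) A) *
        (Rmat A qi q m * kron (1 : Matrix (Fin m) (Fin m) A) M12) =
      kron (1 : Matrix (Fin m) (Fin m) A) M12 *
        (Rmat A qi q m * kron N (1 : Matrix (Fin m) (Fin m) A)) := by
  have rn' : Rmat A q qi m * (kron M12 (1 : Matrix (Fin m) (Fin m) A) *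
      kron (1 : Matrix (Fin m) (Fin m) A) M12) =
      kron (1 : Matrix (Fin m) (Fin m) A) M12 *
        (kron M12 (1 : Matrix (Fin m) (Fin m) A) * Rmat A q qi m) := by
    rw [← kron_split, rn12, kron'_split, Matrix.mul_assoc]
  have step : Rmat A qi q m * (kron (1 : Matrix (Fin m) (Fin m) A) M12 *
      (kron M12 (1 : Matrix (Fin m) (Fin m) A) * Rmat A q qi m)) =
      kron M12 (1 : Matrix (Fin m) (Fin m) A) * kron (1 : Matrix (Fin m) (Fin m) A) M12 := by
    rw [← rn', ← Matrix.mul_assoc, Rmat_mul_Rmat qi q hqinv', Matrix.one_mul]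
  calc kron N (1 : Matrix (Fin m) (Fin m) A) *
        (Rmat A qi q m * kron (1 : Matrix (Fin m) (Fin m) A) M12)
      = kron N (1 : Matrix (Fin m) (Fin m) A) *
        (Rmat A qi q m * (kron (1 : Matrix (Fin m) (Fin m) A) M12 *
          ((kron M12 (1 : Matrix (Fin m) (Fin m) A) * Rmat A q qi m) *
            (Rmat A qi q m * kron N (1 : Matrix (Fin m) (Fin m) A))))) := by
        rw [show (kron M12 (1 : Matrix (Fin m) (Fin m) A) * Rmat A q qi m) *
            (Rmat A qi q m * kron N (1 : Matrix (Fin m) (Fin m) A)) =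
            (1 : Matrix ((Fin m) × (Fin m)) ((Fin m) × (Fin m)) A) from ?_, Matrix.mul_one]
        rw [Matrix.mul_assoc, ← Matrix.mul_assoc (Rmat A q qi m), Rmat_mul_Rmat q qi hqinv,
          Matrix.one_mul, kron_invr hN]
    _ = kron N (1 : Matrix (Fin m) (Fin m) A) *
        (Rmat A qi q m * (kron (1 : Matrix (Fin m) (Fin m) A) M12 *
          (kron M12 (1 : Matrix (Fin m) (Fin m) A) * Rmat A q qi m))) *
          (Rmat A qi q m * kron N (1 : Matrix (Fin m) (Fin m) A)) := by
        simp only [Matrix.mul_assoc]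
    _ = kron N (1 : Matrix (Fin m) (Fin m) A) *
        (kron M12 (1 : Matrix (Fin m) (Fin m) A) * kron (1 : Matrix (Fin m) (Fin m) A) M12) *
          (Rmat A qi q m * kron N (1 : Matrix (Fin m) (Fin m) A)) := by rw [step]
    _ = (kron N (1 : Matrix (Fin m) (Fin m) A) * kron M12 (1 : Matrix (Fin m) (Fin m) A)) *
        (kron (1 : Matrix (Fin m) (Fin m) A) M12 *
          (Rmat A qi q m * kron N (1 : Matrix (Fin m) (Fin m) A))) := by
        simp only [Matrix.mul_assoc]
    _ = kron (1 : Matrix (Fin m) (Fin m) A) M12 *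
        (Rmat A qi q m * kron N (1 : Matrix (Fin m) (Fin m) A)) := by
        rw [kron_invl hN', Matrix.one_mul]
end sig

section PPP
variable {m n₁ n₂ : ℕ} {q qi : A}
  {M11 : Matrix (Fin m) (Fin n₁) A} {M12 N : Matrix (Fin m) (Fin m) A}
  {M21 : Matrix (Fin n₂) (Fin n₁) A} {M22 : Matrix (Fin n₂) (Fin m) A}

lemma P2a_lem (hθ : ∀ a : A, Commute (q - qi) a) (hqinv' : qi * q = 1)
    (hN : M12 * N = 1) (hN' : N * M12 = 1)
    (rn11 : Rmat A q qi m * kron M11 M11 = kron' M11 M11 * Rmat A q qi n₁)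
    (rl : Rmat A q qi m * kron M12 M11 = kron' M12 M11)
    (rh : kron M22 M11 + Gl (q - qi) M12 M21 = kron' M22 M11)
    (rc : kron M11 M21 = kron' M11 M21 * Rmat A q qi n₁)
    (rd : kron M21 M11 + Gl (q - qi) M11 M21 = kron' M21 M11 * Rmat A q qi n₁)
    (hcN : ∀ x u a b, Commute (M21 x u) (N a b)) :
    kron (M22 * N * M11 - M21) M11 =
      kron' (M22 * N * M11 - M21) M11 * Rmat A q qi n₁ := by
  have s3 : kron M11 M11 = Rmat A qi q m * (kron' M11 M11 * Rmat A q qi n₁) := by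
    rw [← rn11, ← Matrix.mul_assoc, Rmat_mul_Rmat qi q hqinv', Matrix.one_mul]
  have f1 : kron M22 (1 : Matrix (Fin m) (Fin m) A) *
      (kron N (1 : Matrix (Fin m) (Fin m) A) * kron M11 (1 : Matrix (Fin m) (Fin m) A)) =
      kron (M22 * N * M11) (1 : Matrix (Fin m) (Fin m) A) := by
    rw [kron_one_mul, kron_one_mul, ← Matrix.mul_assoc]
  have f2 : kron M22 (1 : Matrix (Fin n₁) (Fin n₁) A) *
      (kron N (1 : Matrix (Fin n₁) (Fin n₁) A) * kron M11 (1 : Matrix (Fin n₁) (Fin n₁) A)) =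
      kron (M22 * N * M11) (1 : Matrix (Fin n₁) (Fin n₁) A) := by
    rw [kron_one_mul, kron_one_mul, ← Matrix.mul_assoc]
  have junk : Gl (q - qi) M12 M21 * (kron N (1 : Matrix (Fin n₁) (Fin n₁) A) *
      (kron M11 (1 : Matrix (Fin n₁) (Fin n₁) A) * Rmat A q qi n₁)) =
      Gl (q - qi) M11 M21 := by
    rw [Gl_eq_pmat, Matrix.smul_mul, Matrix.mul_assoc]
    rw [show kron M12 M21 * (kron N (1 : Matrix (Fin n₁) (Fin n₁) A) *
        (kron M11 (1 : Matrix (Fin n₁) (Fin n₁) A) * Rmat A q qi n₁)) =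
        (kron M12 M21 * kron N (1 : Matrix (Fin n₁) (Fin n₁) A)) *
          kron M11 (1 : Matrix (Fin n₁) (Fin n₁) A) * Rmat A q qi n₁ by
      simp only [Matrix.mul_assoc]]
    rw [kron_mul_kron _ _ _ _ (fun a b i j => hcN a b i j), hN, Matrix.mul_one,
      ← kron'_split, ← rc, ← Gl_eq_pmat]
  have key : kron (M22 * N * M11) M11 =
      kron' (M22 * N * M11) M11 * Rmat A q qi n₁ - Gl (q - qi) M11 M21 := by
    calc kron (M22 * N * M11) M11
        = kron (M22 * N * M11) (1 : Matrix (Fin m) (Fin m) A) *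
            kron (1 : Matrix (Fin n₁) (Fin n₁) A) M11 := kron_split _ _
      _ = kron M22 (1 : Matrix (Fin m) (Fin m) A) *
            (kron N (1 : Matrix (Fin m) (Fin m) A) *
              (kron M11 (1 : Matrix (Fin m) (Fin m) A) *
                kron (1 : Matrix (Fin n₁) (Fin n₁) A) M11)) := by
          rw [← f1]; simp only [Matrix.mul_assoc]
      _ = kron M22 (1 : Matrix (Fin m) (Fin m) A) *
            (kron N (1 : Matrix (Fin m) (Fin m) A) * kron M11 M11) := by
          rw [← kron_split]
      _ = kron M22 (1 : Matrix (Fin m) (Fin m) A) *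
            ((kron N (1 : Matrix (Fin m) (Fin m) A) *
              (Rmat A qi q m * kron (1 : Matrix (Fin m) (Fin m) A) M11)) *
              (kron M11 (1 : Matrix (Fin n₁) (Fin n₁) A) * Rmat A q qi n₁)) := by
          rw [s3, kron'_split M11 M11]; simp only [Matrix.mul_assoc]
      _ = kron M22 (1 : Matrix (Fin m) (Fin m) A) *
            ((kron (1 : Matrix (Fin m) (Fin m) A) M11 *
                kron N (1 : Matrix (Fin n₁) (Fin n₁) A)) *
              (kron M11 (1 : Matrix (Fin n₁) (Fin n₁) A) * Rmat A q qi n₁)) := by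
          rw [sigma1 hqinv' hN hN' rl]
      _ = (kron M22 (1 : Matrix (Fin m) (Fin m) A) * kron (1 : Matrix (Fin m) (Fin m) A) M11) *
            (kron N (1 : Matrix (Fin n₁) (Fin n₁) A) *
              (kron M11 (1 : Matrix (Fin n₁) (Fin n₁) A) * Rmat A q qi n₁)) := by
          simp only [Matrix.mul_assoc]
      _ = (kron' M22 M11 - Gl (q - qi) M12 M21) *
            (kron N (1 : Matrix (Fin n₁) (Fin n₁) A) *
              (kron M11 (1 : Matrix (Fin n₁) (Fin n₁) A) * Rmat A q qi n₁)) := by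
          rw [← kron_split, eq_sub_of_add_eq rh]
      _ = kron' M22 M11 * (kron N (1 : Matrix (Fin n₁) (Fin n₁) A) *
            (kron M11 (1 : Matrix (Fin n₁) (Fin n₁) A) * Rmat A q qi n₁)) -
          Gl (q - qi) M12 M21 * (kron N (1 : Matrix (Fin n₁) (Fin n₁) A) *
            (kron M11 (1 : Matrix (Fin n₁) (Fin n₁) A) * Rmat A q qi n₁)) :=
          Matrix.sub_mul _ _ _
      _ = kron (1 : Matrix (Fin n₂) (Fin n₂) A) M11 *
            (kron M22 (1 : Matrix (Fin n₁) (Fin n₁) A) *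
              (kron N (1 : Matrix (Fin n₁) (Fin n₁) A) *
                kron M11 (1 : Matrix (Fin n₁) (Fin n₁) A))) * Rmat A q qi n₁ -
          Gl (q - qi) M11 M21 := by
          rw [junk, kron'_split M22 M11]; simp only [Matrix.mul_assoc]
      _ = kron' (M22 * N * M11) M11 * Rmat A q qi n₁ - Gl (q - qi) M11 M21 := by
          rw [f2, ← kron'_split]
  calc kron (M22 * N * M11 - M21) M11
      = kron (M22 * N * M11) M11 - kron M21 M11 := kron_sub_left _ _ _
    _ = (kron' (M22 * N * M11) M11 * Rmat A q qi n₁ - Gl (q - qi) M11 M21) -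
        (kron' M21 M11 * Rmat A q qi n₁ - Gl (q - qi) M11 M21) := by
        rw [key, eq_sub_of_add_eq rd]
    _ = kron' (M22 * N * M11) M11 * Rmat A q qi n₁ - kron' M21 M11 * Rmat A q qi n₁ := by
        abel
    _ = kron' (M22 * N * M11 - M21) M11 * Rmat A q qi n₁ := by
        rw [kron'_sub_left, Matrix.sub_mul]

end PPP

section P1sec
variable {m n₁ n₂ : ℕ} {q qi : A}
  {M11 : Matrix (Fin m) (Fin n₁) A} {M12 N : Matrix (Fin m) (Fin m) A}
  {M21 : Matrix (Fin n₂) (Fin n₁) A} {M22 : Matrix (Fin n₂) (Fin m) A}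

lemma pswap_e1 : PmatG A n₂ n₂ * kron' M21 M22 = kron M22 M21 * PmatG A m n₁ := by
  ext p r
  rw [PmatG_mul, mul_PmatG]
  rfl

lemma pswap_e2 : PmatG A n₂ n₂ * kron M21 M22 = kron' M22 M21 * PmatG A m n₁ := by
  ext p r
  rw [PmatG_mul, mul_PmatG]
  rfl

lemma JJ_lem (ri : Rmat A q qi n₂ * kron M22 M21 = kron' M22 M21) :
    Rmat A q qi n₂ * (PmatG A n₂ n₂ * kron' M21 M22) = PmatG A n₂ n₂ * kron M21 M22 := by
  rw [pswap_e1, ← Matrix.mul_assoc, ri, ← pswap_e2]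

lemma P1_lem (hθ : ∀ a : A, Commute (q - qi) a) (hqinv : q * qi = 1)
    (hN : M12 * N = 1) (hN' : N * M12 = 1)
    (rn22 : Rmat A q qi n₂ * kron M22 M22 = kron' M22 M22 * Rmat A q qi m)
    (re : kron M12 M22 = kron' M12 M22 * Rmat A q qi m)
    (rg : kron M11 M22 = kron' M11 M22 + Gr (q - qi) M21 M12)
    (ri : Rmat A q qi n₂ * kron M22 M21 = kron' M22 M21)
    (rj : Rmat A q qi n₂ * kron M21 M22 = kron' M21 M22 + Gr (q - qi) M21 M22)
    (hcN : ∀ x u a b, Commute (M21 x u) (N a b)) :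
    Rmat A q qi n₂ * kron (M22 * N * M11 - M21) M22 =
      kron' (M22 * N * M11 - M21) M22 := by
  have rg' : kron M11 M22 = kron' M11 M22 + Gl (q - qi) M21 M12 := by
    rw [rg, Gr_eq_Gl _ hθ]
  have rj' : Rmat A q qi n₂ * kron M21 M22 = kron' M21 M22 + Gl (q - qi) M21 M22 := by
    rw [rj, Gr_eq_Gl _ hθ]
  have f1 : kron M22 (1 : Matrix (Fin m) (Fin m) A) *
      (kron N (1 : Matrix (Fin m) (Fin m) A) * kron M11 (1 : Matrix (Fin m) (Fin m) A)) =
      kron (M22 * N * M11) (1 : Matrix (Fin m) (Fin m) A) := by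
    rw [kron_one_mul, kron_one_mul, ← Matrix.mul_assoc]
  -- junk chain
  have junk : Rmat A q qi n₂ * (kron M22 (1 : Matrix (Fin n₂) (Fin n₂) A) *
      (kron N (1 : Matrix (Fin n₂) (Fin n₂) A) * Gl (q - qi) M21 M12)) =
      Gl (q - qi) M21 M22 := by
    have j1 : kron N (1 : Matrix (Fin n₂) (Fin n₂) A) * (PmatG A m n₂ * kron M21 M12) =
        PmatG A m n₂ * kron M21 (1 : Matrix (Fin m) (Fin m) A) := by
      rw [← Matrix.mul_assoc, PmatG_swap₁, Matrix.mul_assoc,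
        kron_mul_kron _ _ _ _ (fun a b i j => (hcN i j a b).symm), Matrix.one_mul, hN']
    have j2 : kron M22 (1 : Matrix (Fin n₂) (Fin n₂) A) *
        (PmatG A m n₂ * kron M21 (1 : Matrix (Fin m) (Fin m) A)) =
        PmatG A n₂ n₂ * kron' M21 M22 := by
      rw [← Matrix.mul_assoc, PmatG_swap₁, Matrix.mul_assoc, ← kron'_split]
    rw [Gl_eq_pmat, mul_smul_central _ hθ, j1, mul_smul_central _ hθ, j2,
      mul_smul_central _ hθ, JJ_lem ri, ← Gl_eq_pmat]
  have main : Rmat A q qi n₂ * (kron M22 (1 : Matrix (Fin n₂) (Fin n₂) A) *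
      (kron N (1 : Matrix (Fin n₂) (Fin n₂) A) *
        (kron (1 : Matrix (Fin m) (Fin m) A) M22 * kron M11 (1 : Matrix (Fin m) (Fin m) A)))) =
      kron' (M22 * N * M11) M22 := by
    calc Rmat A q qi n₂ * (kron M22 (1 : Matrix (Fin n₂) (Fin n₂) A) *
        (kron N (1 : Matrix (Fin n₂) (Fin n₂) A) *
          (kron (1 : Matrix (Fin m) (Fin m) A) M22 * kron M11 (1 : Matrix (Fin m) (Fin m) A))))
        = Rmat A q qi n₂ * (kron M22 (1 : Matrix (Fin n₂) (Fin n₂) A) *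
          ((kron N (1 : Matrix (Fin n₂) (Fin n₂) A) * kron (1 : Matrix (Fin m) (Fin m) A) M22) *
            kron M11 (1 : Matrix (Fin m) (Fin m) A))) := by
          simp only [Matrix.mul_assoc]
      _ = Rmat A q qi n₂ * (kron M22 (1 : Matrix (Fin n₂) (Fin n₂) A) *
          ((kron (1 : Matrix (Fin m) (Fin m) A) M22 *
            (Rmat A qi q m * kron N (1 : Matrix (Fin m) (Fin m) A))) *
            kron M11 (1 : Matrix (Fin m) (Fin m) A))) := by
          rw [← sigma2 hqinv hN hN' re]
      _ = (Rmat A q qi n₂ * (kron M22 (1 : Matrix (Fin n₂) (Fin n₂) A) *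
            kron (1 : Matrix (Fin m) (Fin m) A) M22)) *
          (Rmat A qi q m * (kron N (1 : Matrix (Fin m) (Fin m) A) *
            kron M11 (1 : Matrix (Fin m) (Fin m) A))) := by
          simp only [Matrix.mul_assoc]
      _ = (kron' M22 M22 * Rmat A q qi m) *
          (Rmat A qi q m * (kron N (1 : Matrix (Fin m) (Fin m) A) *
            kron M11 (1 : Matrix (Fin m) (Fin m) A))) := by
          rw [← kron_split, rn22]
      _ = kron' M22 M22 * ((Rmat A q qi m * Rmat A qi q m) *
          (kron N (1 : Matrix (Fin m) (Fin m) A) * kron M11 (1 : Matrix (Fin m) (Fin m) A))) := by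
          simp only [Matrix.mul_assoc]
      _ = kron (1 : Matrix (Fin n₂) (Fin n₂) A) M22 * (kron M22 (1 : Matrix (Fin m) (Fin m) A) *
          (kron N (1 : Matrix (Fin m) (Fin m) A) * kron M11 (1 : Matrix (Fin m) (Fin m) A))) := by
          rw [Rmat_mul_Rmat q qi hqinv, Matrix.one_mul, kron'_split M22 M22]
          simp only [Matrix.mul_assoc]
      _ = kron' (M22 * N * M11) M22 := by rw [f1, ← kron'_split]
  calc Rmat A q qi n₂ * kron (M22 * N * M11 - M21) M22
      = Rmat A q qi n₂ * kron (M22 * N * M11) M22 - Rmat A q qi n₂ * kron M21 M22 := by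
        rw [kron_sub_left, Matrix.mul_sub]
    _ = Rmat A q qi n₂ * (kron M22 (1 : Matrix (Fin n₂) (Fin n₂) A) *
          (kron N (1 : Matrix (Fin n₂) (Fin n₂) A) *
            (kron (1 : Matrix (Fin m) (Fin m) A) M22 * kron M11 (1 : Matrix (Fin m) (Fin m) A) +
              Gl (q - qi) M21 M12))) -
        (kron' M21 M22 + Gl (q - qi) M21 M22) := by
        rw [rj']
        congr 2
        calc kron (M22 * N * M11) M22
            = kron (M22 * N * M11) (1 : Matrix (Fin n₂) (Fin n₂) A) *
              kron (1 : Matrix (Fin n₁) (Fin n₁) A) M22 := kron_split _ _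
          _ = kron M22 (1 : Matrix (Fin n₂) (Fin n₂) A) *
              (kron N (1 : Matrix (Fin n₂) (Fin n₂) A) *
                (kron M11 (1 : Matrix (Fin n₂) (Fin n₂) A) *
                  kron (1 : Matrix (Fin n₁) (Fin n₁) A) M22)) := by
              rw [show kron (M22 * N * M11) (1 : Matrix (Fin n₂) (Fin n₂) A) =
                  kron M22 (1 : Matrix (Fin n₂) (Fin n₂) A) *
                  (kron N (1 : Matrix (Fin n₂) (Fin n₂) A) *
                    kron M11 (1 : Matrix (Fin n₂) (Fin n₂) A)) from by
                rw [kron_one_mul, kron_one_mul, ← Matrix.mul_assoc]]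
              simp only [Matrix.mul_assoc]
          _ = kron M22 (1 : Matrix (Fin n₂) (Fin n₂) A) *
              (kron N (1 : Matrix (Fin n₂) (Fin n₂) A) * kron M11 M22) := by
              rw [← kron_split]
          _ = kron M22 (1 : Matrix (Fin n₂) (Fin n₂) A) *
              (kron N (1 : Matrix (Fin n₂) (Fin n₂) A) *
                (kron (1 : Matrix (Fin m) (Fin m) A) M22 *
                  kron M11 (1 : Matrix (Fin m) (Fin m) A) + Gl (q - qi) M21 M12)) := by
              rw [rg', kron'_split M11 M22]
    _ = (Rmat A q qi n₂ * (kron M22 (1 : Matrix (Fin n₂) (Fin n₂) A) *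
          (kron N (1 : Matrix (Fin n₂) (Fin n₂) A) *
            (kron (1 : Matrix (Fin m) (Fin m) A) M22 * kron M11 (1 : Matrix (Fin m) (Fin m) A)))) +
        Rmat A q qi n₂ * (kron M22 (1 : Matrix (Fin n₂) (Fin n₂) A) *
          (kron N (1 : Matrix (Fin n₂) (Fin n₂) A) * Gl (q - qi) M21 M12))) -
        (kron' M21 M22 + Gl (q - qi) M21 M22) := by
        rw [Matrix.mul_add, Matrix.mul_add, Matrix.mul_add]
    _ = (kron' (M22 * N * M11) M22 + Gl (q - qi) M21 M22) -
        (kron' M21 M22 + Gl (q - qi) M21 M22) := by rw [main, junk]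
    _ = kron' (M22 * N * M11) M22 - kron' M21 M22 := by abel
    _ = kron' (M22 * N * M11 - M21) M22 := (kron'_sub_left _ _ _).symm

end P1sec

section P2bsec
variable {m n₁ n₂ : ℕ} {q qi : A}
  {M11 : Matrix (Fin m) (Fin n₁) A} {M12 N : Matrix (Fin m) (Fin m) A}
  {M21 : Matrix (Fin n₂) (Fin n₁) A} {M22 : Matrix (Fin n₂) (Fin m) A}

lemma P2b_lem (hθ : ∀ a : A, Commute (q - qi) a) (hqinv : q * qi = 1) (hqinv' : qi * q = 1)
    (hN : M12 * N = 1) (hN' : N * M12 = 1)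
    (rm : Rmat A q qi m * kron M11 M12 = kron' M11 M12 + Gr (q - qi) M11 M12)
    (rn12 : Rmat A q qi m * kron M12 M12 = kron' M12 M12 * Rmat A q qi m)
    (re : kron M12 M22 = kron' M12 M22 * Rmat A q qi m)
    (rf : kron M22 M12 + Gl (q - qi) M12 M22 = kron' M22 M12 * Rmat A q qi m)
    (ra : ∀ x u y v, Commute (M21 x u) (M12 y v)) :
    kron (M22 * N * M11 - M21) M12 = kron' (M22 * N * M11 - M21) M12 := by
  have rm' : Rmat A q qi m * kron M11 M12 = kron' M11 M12 + Gl (q - qi) M11 M12 := by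
    rw [rm, Gr_eq_Gl _ hθ]
  have hmm : kron M11 M12 = Rmat A qi q m * kron' M11 M12 +
      (q - qi) • (PmatG A m m * kron' M11 M12) := by
    rw [← rg_lem hθ hqinv rm, ← Matrix.mul_add, ← rm', ← Matrix.mul_assoc,
      Rmat_mul_Rmat qi q hqinv', Matrix.one_mul]
  have junk1 : kron M22 (1 : Matrix (Fin m) (Fin m) A) *
      (kron N (1 : Matrix (Fin m) (Fin m) A) *
        ((q - qi) • (PmatG A m m * kron' M11 M12))) =
      (q - qi) • (PmatG A n₂ m * kron' M11 M22) := by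
    have j1 : kron N (1 : Matrix (Fin m) (Fin m) A) * (PmatG A m m * kron' M11 M12) =
        PmatG A m m * kron M11 (1 : Matrix (Fin m) (Fin m) A) := by
      rw [kron'_split M11 M12, ← Matrix.mul_assoc, PmatG_swap₁, Matrix.mul_assoc,
        ← Matrix.mul_assoc (kron (1 : Matrix (Fin m) (Fin m) A) N),
        mul_kron_one, hN', kron_one_one, Matrix.one_mul]
    have j2 : kron M22 (1 : Matrix (Fin m) (Fin m) A) *
        (PmatG A m m * kron M11 (1 : Matrix (Fin m) (Fin m) A)) =
        PmatG A n₂ m * kron' M11 M22 := by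
      rw [← Matrix.mul_assoc, PmatG_swap₁, Matrix.mul_assoc, ← kron'_split]
    rw [mul_smul_central _ hθ, j1, mul_smul_central _ hθ, j2]
  -- junk 2 : from the Gl-part of rf
  have junk2 : Gl (q - qi) M12 M22 *
      (Rmat A qi q m * (kron N (1 : Matrix (Fin m) (Fin m) A) *
        kron M11 (1 : Matrix (Fin m) (Fin m) A))) =
      (q - qi) • (PmatG A n₂ m * kron' M11 M22) := by
    rw [← Matrix.mul_assoc, eg_lem hqinv re, Matrix.smul_mul]
    congr 1
    rw [kron'_split M12 M22]
    simp only [Matrix.mul_assoc]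
    rw [show kron M12 (1 : Matrix (Fin m) (Fin m) A) *
        (kron N (1 : Matrix (Fin m) (Fin m) A) * kron M11 (1 : Matrix (Fin m) (Fin m) A)) =
        kron M11 (1 : Matrix (Fin m) (Fin m) A) from by
      rw [← Matrix.mul_assoc, kron_invr hN, Matrix.one_mul], ← kron'_split]
  have main : kron (M22 * N * M11) M12 = kron' (M22 * N * M11) M12 := by
    calc kron (M22 * N * M11) M12
        = kron (M22 * N * M11) (1 : Matrix (Fin m) (Fin m) A) *
            kron (1 : Matrix (Fin n₁) (Fin n₁) A) M12 := kron_split _ _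
      _ = kron M22 (1 : Matrix (Fin m) (Fin m) A) *
            (kron N (1 : Matrix (Fin m) (Fin m) A) *
              (kron M11 (1 : Matrix (Fin m) (Fin m) A) *
                kron (1 : Matrix (Fin n₁) (Fin n₁) A) M12)) := by
          rw [show kron (M22 * N * M11) (1 : Matrix (Fin m) (Fin m) A) =
              kron M22 (1 : Matrix (Fin m) (Fin m) A) *
              (kron N (1 : Matrix (Fin m) (Fin m) A) *
                kron M11 (1 : Matrix (Fin m) (Fin m) A)) from by
            rw [kron_one_mul, kron_one_mul, ← Matrix.mul_assoc]]
          simp only [Matrix.mul_assoc]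
      _ = kron M22 (1 : Matrix (Fin m) (Fin m) A) *
            (kron N (1 : Matrix (Fin m) (Fin m) A) * kron M11 M12) := by rw [← kron_split]
      _ = kron M22 (1 : Matrix (Fin m) (Fin m) A) *
            (kron N (1 : Matrix (Fin m) (Fin m) A) *
              (Rmat A qi q m * (kron (1 : Matrix (Fin m) (Fin m) A) M12 *
                kron M11 (1 : Matrix (Fin m) (Fin m) A)))) +
          (q - qi) • (PmatG A n₂ m * kron' M11 M22) := by
          rw [hmm, Matrix.mul_add, Matrix.mul_add, junk1, kron'_split M11 M12]
      _ = kron M22 (1 : Matrix (Fin m) (Fin m) A) *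
            ((kron (1 : Matrix (Fin m) (Fin m) A) M12 *
              (Rmat A qi q m * kron N (1 : Matrix (Fin m) (Fin m) A))) *
              kron M11 (1 : Matrix (Fin m) (Fin m) A)) +
          (q - qi) • (PmatG A n₂ m * kron' M11 M22) := by
          rw [show kron N (1 : Matrix (Fin m) (Fin m) A) *
              (Rmat A qi q m * (kron (1 : Matrix (Fin m) (Fin m) A) M12 *
                kron M11 (1 : Matrix (Fin m) (Fin m) A))) =
              (kron N (1 : Matrix (Fin m) (Fin m) A) *
                (Rmat A qi q m * kron (1 : Matrix (Fin m) (Fin m) A) M12)) *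
                kron M11 (1 : Matrix (Fin m) (Fin m) A) from by
            simp only [Matrix.mul_assoc]]
          rw [sigma3 hqinv hqinv' hN hN' rn12]
      _ = kron M22 M12 * (Rmat A qi q m * (kron N (1 : Matrix (Fin m) (Fin m) A) *
            kron M11 (1 : Matrix (Fin m) (Fin m) A))) +
          (q - qi) • (PmatG A n₂ m * kron' M11 M22) := by
          rw [kron_split M22 M12]
          simp only [Matrix.mul_assoc]
      _ = kron' M22 M12 * (Rmat A q qi m * (Rmat A qi q m *
            (kron N (1 : Matrix (Fin m) (Fin m) A) * kron M11 (1 : Matrix (Fin m) (Fin m) A)))) -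
          Gl (q - qi) M12 M22 * (Rmat A qi q m * (kron N (1 : Matrix (Fin m) (Fin m) A) *
            kron M11 (1 : Matrix (Fin m) (Fin m) A))) +
          (q - qi) • (PmatG A n₂ m * kron' M11 M22) := by
          rw [eq_sub_of_add_eq rf, Matrix.sub_mul]
          simp only [Matrix.mul_assoc]
      _ = kron' M22 M12 * (kron N (1 : Matrix (Fin m) (Fin m) A) *
            kron M11 (1 : Matrix (Fin m) (Fin m) A)) := by
          rw [junk2, ← Matrix.mul_assoc (Rmat A q qi m), Rmat_mul_Rmat q qi hqinv,
            Matrix.one_mul]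
          abel
      _ = kron (1 : Matrix (Fin n₂) (Fin n₂) A) M12 * (kron M22 (1 : Matrix (Fin m) (Fin m) A) *
            (kron N (1 : Matrix (Fin m) (Fin m) A) * kron M11 (1 : Matrix (Fin m) (Fin m) A))) := by
          rw [kron'_split M22 M12]
          simp only [Matrix.mul_assoc]
      _ = kron' (M22 * N * M11) M12 := by
          rw [show kron M22 (1 : Matrix (Fin m) (Fin m) A) *
              (kron N (1 : Matrix (Fin m) (Fin m) A) *
                kron M11 (1 : Matrix (Fin m) (Fin m) A)) =
              kron (M22 * N * M11) (1 : Matrix (Fin m) (Fin m) A) from by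
            rw [kron_one_mul, kron_one_mul, ← Matrix.mul_assoc], ← kron'_split]
  rw [kron_sub_left, kron'_sub_left, main, kron_comm_eq M21 M12 ra]

end P2bsec

section asm
variable {m n₁ n₂ : ℕ} {q qi : A}
  {M11 : Matrix (Fin m) (Fin n₁) A} {M12 N : Matrix (Fin m) (Fin m) A}
  {M21 : Matrix (Fin n₂) (Fin n₁) A} {M22 : Matrix (Fin n₂) (Fin m) A}

lemma step_lem (T : Matrix (Fin n₂) (Fin n₁) A) (Z : Matrix (Fin m) (Fin n₁) A)
    (h1 : Rmat A q qi n₂ * kron T M22 = kron' T M22)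
    (h2 : kron T Z = kron' T Z * Rmat A q qi n₁) :
    Rmat A q qi n₂ * kron T (M22 * Z) = kron' T (M22 * Z) * Rmat A q qi n₁ := by
  calc Rmat A q qi n₂ * kron T (M22 * Z)
      = Rmat A q qi n₂ * (kron T M22 * kron (1 : Matrix (Fin n₁) (Fin n₁) A) Z) := by
        rw [kron_mul_kron _ _ _ _ (fun a b i j => (commute_one_entry (M22 a b) i j).symm),
          Matrix.mul_one]
    _ = kron' T M22 * kron (1 : Matrix (Fin n₁) (Fin n₁) A) Z := by
        rw [← Matrix.mul_assoc, h1]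
    _ = kron (1 : Matrix (Fin n₂) (Fin n₂) A) M22 *
          (kron T (1 : Matrix (Fin m) (Fin m) A) * kron (1 : Matrix (Fin n₁) (Fin n₁) A) Z) := by
        rw [kron'_split T M22, Matrix.mul_assoc]
    _ = kron (1 : Matrix (Fin n₂) (Fin n₂) A) M22 * (kron' T Z * Rmat A q qi n₁) := by
        rw [← kron_split, h2]
    _ = (kron (1 : Matrix (Fin n₂) (Fin n₂) A) M22 * kron (1 : Matrix (Fin n₂) (Fin n₂) A) Z) *
          (kron T (1 : Matrix (Fin n₁) (Fin n₁) A) * Rmat A q qi n₁) := by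
        rw [kron'_split T Z]
        simp only [Matrix.mul_assoc]
    _ = kron (1 : Matrix (Fin n₂) (Fin n₂) A) (M22 * Z) *
          (kron T (1 : Matrix (Fin n₁) (Fin n₁) A) * Rmat A q qi n₁) := by
        rw [mul_kron_one]
    _ = kron' T (M22 * Z) * Rmat A q qi n₁ := by
        rw [← Matrix.mul_assoc, ← kron'_split]

lemma slide_lem (T : Matrix (Fin n₂) (Fin n₁) A) (Y : Matrix (Fin m) (Fin m) A)
    (hc : ∀ a b i j, Commute (Y a b) (T i j))
    (hm : kron T M11 = kron' T M11 * Rmat A q qi n₁) :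
    kron T (Y * M11) = kron' T (Y * M11) * Rmat A q qi n₁ := by
  calc kron T (Y * M11)
      = kron (1 : Matrix (Fin n₂) (Fin n₂) A) Y * kron T M11 := by
        rw [kron_mul_kron _ _ _ _ hc, Matrix.one_mul]
    _ = kron (1 : Matrix (Fin n₂) (Fin n₂) A) Y *
          ((kron (1 : Matrix (Fin n₂) (Fin n₂) A) M11 *
            kron T (1 : Matrix (Fin n₁) (Fin n₁) A)) * Rmat A q qi n₁) := by
        rw [hm, kron'_split T M11]
    _ = (kron (1 : Matrix (Fin n₂) (Fin n₂) A) Y * kron (1 : Matrix (Fin n₂) (Fin n₂) A) M11) *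
          (kron T (1 : Matrix (Fin n₁) (Fin n₁) A) * Rmat A q qi n₁) := by
        simp only [Matrix.mul_assoc]
    _ = kron (1 : Matrix (Fin n₂) (Fin n₂) A) (Y * M11) *
          (kron T (1 : Matrix (Fin n₁) (Fin n₁) A) * Rmat A q qi n₁) := by
        rw [mul_kron_one]
    _ = kron' T (Y * M11) * Rmat A q qi n₁ := by
        rw [← Matrix.mul_assoc, ← kron'_split]

lemma BD_lem (W : Matrix (Fin m) (Fin m) A)
    (hcW : ∀ x u a b, Commute (M21 x u) (W a b))
    (rc : kron M11 M21 = kron' M11 M21 * Rmat A q qi n₁)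
    (ri : Rmat A q qi n₂ * kron M22 M21 = kron' M22 M21) :
    Rmat A q qi n₂ * kron (M22 * W * M11) M21 =
      kron' (M22 * W * M11) M21 * Rmat A q qi n₁ := by
  have key : kron (M22 * W * M11) M21 =
      kron M22 M21 * (kron W (1 : Matrix (Fin n₁) (Fin n₁) A) *
        (kron M11 (1 : Matrix (Fin n₁) (Fin n₁) A) * Rmat A q qi n₁)) := by
    calc kron (M22 * W * M11) M21
        = kron (M22 * W * M11) (1 : Matrix (Fin n₂) (Fin n₂) A) *
            kron (1 : Matrix (Fin n₁) (Fin n₁) A) M21 := kron_split _ _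
      _ = kron M22 (1 : Matrix (Fin n₂) (Fin n₂) A) *
            (kron W (1 : Matrix (Fin n₂) (Fin n₂) A) *
              (kron M11 (1 : Matrix (Fin n₂) (Fin n₂) A) *
                kron (1 : Matrix (Fin n₁) (Fin n₁) A) M21)) := by
          rw [show kron (M22 * W * M11) (1 : Matrix (Fin n₂) (Fin n₂) A) =
              kron M22 (1 : Matrix (Fin n₂) (Fin n₂) A) *
              (kron W (1 : Matrix (Fin n₂) (Fin n₂) A) *
                kron M11 (1 : Matrix (Fin n₂) (Fin n₂) A)) from by
            rw [kron_one_mul, kron_one_mul, ← Matrix.mul_assoc]]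
          simp only [Matrix.mul_assoc]
      _ = kron M22 (1 : Matrix (Fin n₂) (Fin n₂) A) *
            (kron W (1 : Matrix (Fin n₂) (Fin n₂) A) *
              ((kron (1 : Matrix (Fin m) (Fin m) A) M21 *
                kron M11 (1 : Matrix (Fin n₁) (Fin n₁) A)) * Rmat A q qi n₁)) := by
          rw [← kron_split, rc, kron'_split M11 M21]
      _ = kron M22 (1 : Matrix (Fin n₂) (Fin n₂) A) *
            ((kron W (1 : Matrix (Fin n₂) (Fin n₂) A) *
              kron (1 : Matrix (Fin m) (Fin m) A) M21) *
              (kron M11 (1 : Matrix (Fin n₁) (Fin n₁) A) * Rmat A q qi n₁)) := by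
          simp only [Matrix.mul_assoc]
      _ = kron M22 (1 : Matrix (Fin n₂) (Fin n₂) A) *
            ((kron (1 : Matrix (Fin m) (Fin m) A) M21 *
              kron W (1 : Matrix (Fin n₁) (Fin n₁) A)) *
              (kron M11 (1 : Matrix (Fin n₁) (Fin n₁) A) * Rmat A q qi n₁)) := by
          rw [← kron_split, kron_comm_eq W M21 (fun i j a b => (hcW a b i j).symm),
            kron'_split W M21]
      _ = (kron M22 (1 : Matrix (Fin n₂) (Fin n₂) A) * kron (1 : Matrix (Fin m) (Fin m) A) M21) *
            (kron W (1 : Matrix (Fin n₁) (Fin n₁) A) *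
              (kron M11 (1 : Matrix (Fin n₁) (Fin n₁) A) * Rmat A q qi n₁)) := by
          simp only [Matrix.mul_assoc]
      _ = kron M22 M21 * (kron W (1 : Matrix (Fin n₁) (Fin n₁) A) *
            (kron M11 (1 : Matrix (Fin n₁) (Fin n₁) A) * Rmat A q qi n₁)) := by
          rw [← kron_split]
  calc Rmat A q qi n₂ * kron (M22 * W * M11) M21
      = (Rmat A q qi n₂ * kron M22 M21) * (kron W (1 : Matrix (Fin n₁) (Fin n₁) A) *
          (kron M11 (1 : Matrix (Fin n₁) (Fin n₁) A) * Rmat A q qi n₁)) := by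
        rw [key, Matrix.mul_assoc]
    _ = (kron (1 : Matrix (Fin n₂) (Fin n₂) A) M21 * kron M22 (1 : Matrix (Fin n₁) (Fin n₁) A)) *
          (kron W (1 : Matrix (Fin n₁) (Fin n₁) A) *
            (kron M11 (1 : Matrix (Fin n₁) (Fin n₁) A) * Rmat A q qi n₁)) := by
        rw [ri, kron'_split M22 M21]
    _ = kron (1 : Matrix (Fin n₂) (Fin n₂) A) M21 *
          ((kron M22 (1 : Matrix (Fin n₁) (Fin n₁) A) *
            (kron W (1 : Matrix (Fin n₁) (Fin n₁) A) * kron M11 (1 : Matrix (Fin n₁) (Fin n₁) A))) *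
            Rmat A q qi n₁) := by
        simp only [Matrix.mul_assoc]
    _ = kron' (M22 * W * M11) M21 * Rmat A q qi n₁ := by
        rw [show kron M22 (1 : Matrix (Fin n₁) (Fin n₁) A) *
            (kron W (1 : Matrix (Fin n₁) (Fin n₁) A) * kron M11 (1 : Matrix (Fin n₁) (Fin n₁) A)) =
            kron (M22 * W * M11) (1 : Matrix (Fin n₁) (Fin n₁) A) from by
          rw [kron_one_mul, kron_one_mul, ← Matrix.mul_assoc], ← Matrix.mul_assoc, ← kron'_split]

end asm

/-- homogeneous relations with the zero-level elements. -/
theorem stmt7 (q qi : A) (hq : ∀ a : A, Commute q a) (hqi : ∀ a : A, Commute qi a)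
    (hqinv : q * qi = 1) (hqinv' : qi * q = 1)
    (m n₁ n₂ : ℕ) (hm : 1 ≤ m) (hn₁ : 1 ≤ n₁) (hn₂ : 1 ≤ n₂)
    (M11 : Matrix (Fin m) (Fin n₁) A) (M12 : Matrix (Fin m) (Fin m) A)
    (M21 : Matrix (Fin n₂) (Fin n₁) A) (M22 : Matrix (Fin n₂) (Fin m) A)
    (hex : Rmat A q qi (m + n₂) *
        kron (Matrix.reindex finSumFinEquiv finSumFinEquiv (fromBlocks M11 M12 M21 M22))
          (Matrix.reindex finSumFinEquiv finSumFinEquiv (fromBlocks M11 M12 M21 M22)) =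
      kron' (Matrix.reindex finSumFinEquiv finSumFinEquiv (fromBlocks M11 M12 M21 M22))
          (Matrix.reindex finSumFinEquiv finSumFinEquiv (fromBlocks M11 M12 M21 M22)) *
        Rmat A q qi (n₁ + m))
    (N : Matrix (Fin m) (Fin m) A) (hN : M12 * N = 1) (hN' : N * M12 = 1) :
    (∀ k : ℕ,
      Rmat A q qi n₂ * kron (Tneg M11 N M21 M22 1) (Tpos M11 M12 M21 M22 k) =
        kron' (Tneg M11 N M21 M22 1) (Tpos M11 M12 M21 M22 k) * Rmat A q qi n₁) ∧
    (∀ k : ℕ,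
      Rmat A q qi n₂ * kron (Tpos M11 M12 M21 M22 k) (Tpos M11 M12 M21 M22 0) =
        kron' (Tpos M11 M12 M21 M22 k) (Tpos M11 M12 M21 M22 0) * Rmat A q qi n₁) ∧
    (∀ k : ℕ, 1 ≤ k →
      Rmat A q qi n₂ * kron (Tneg M11 N M21 M22 1) (Tneg M11 N M21 M22 k) =
        kron' (Tneg M11 N M21 M22 1) (Tneg M11 N M21 M22 k) * Rmat A q qi n₁) ∧
    (∀ k : ℕ, 1 ≤ k →
      Rmat A q qi n₂ * kron (Tneg M11 N M21 M22 k) (Tpos M11 M12 M21 M22 0) =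
        kron' (Tneg M11 N M21 M22 k) (Tpos M11 M12 M21 M22 0) * Rmat A q qi n₁) := by
  have hθ : ∀ a : A, Commute (q - qi) a := fun a => (hq a).sub_left (hqi a)
  have hM : MasterRel q qi M11 M12 M21 M22 := master_of_hex q qi M11 M12 M21 M22 hex
  have ra := rel_a hM hθ
  have rc := rel_c hM
  have rd := rel_d hM
  have re := rel_e hM
  have rf := rel_f hM
  have rg := rel_g hM
  have rh := rel_h hM
  have ri := rel_i hM
  have rj := rel_j hM
  have rk := rel_k hM
  have rl := rel_l hM
  have rm := rel_m hM
  have rn11 := rel_n11 hM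
  have rn12 := rel_n12 hM
  have rn22 := rel_n22 hM
  have hcN : ∀ x u a b, Commute (M21 x u) (N a b) :=
    fun x u => commute_inv_entries hN hN' (fun i j => ra x u i j)
  have p2a := P2a_lem hθ hqinv' hN hN' rn11 rl rh rc rd hcN
  have p1 := P1_lem hθ hqinv hN hN' rn22 re rg ri rj hcN
  have p2b := P2b_lem hθ hqinv hqinv' hN hN' rm rn12 re rf ra
  have hLM12 : ∀ i j a b, Commute ((M22 * N * M11 - M21) i j) (M12 a b) := by
    intro i j a b
    exact congrFun (congrFun p2b (i, a)) (j, b)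
  have hLN : ∀ i j a b, Commute ((M22 * N * M11 - M21) i j) (N a b) :=
    fun i j => commute_inv_entries hN hN' (fun a b => hLM12 i j a b)
  have goalLM21 : Rmat A q qi n₂ * kron (M22 * N * M11 - M21) M21 =
      kron' (M22 * N * M11 - M21) M21 * Rmat A q qi n₁ := by
    have h1 := BD_lem N hcN rc ri
    calc Rmat A q qi n₂ * kron (M22 * N * M11 - M21) M21
        = Rmat A q qi n₂ * kron (M22 * N * M11) M21 - Rmat A q qi n₂ * kron M21 M21 := by
          rw [kron_sub_left, Matrix.mul_sub]
      _ = kron' (M22 * N * M11) M21 * Rmat A q qi n₁ - kron' M21 M21 * Rmat A q qi n₁ := by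
          rw [h1, rk]
      _ = kron' (M22 * N * M11 - M21) M21 * Rmat A q qi n₁ := by
          rw [kron'_sub_left, Matrix.sub_mul]
  have goalLMYM : ∀ Y : Matrix (Fin m) (Fin m) A,
      (∀ a b i j, Commute (Y a b) ((M22 * N * M11 - M21) i j)) →
      Rmat A q qi n₂ * kron (M22 * N * M11 - M21) (M22 * Y * M11) =
        kron' (M22 * N * M11 - M21) (M22 * Y * M11) * Rmat A q qi n₁ := by
    intro Y hc
    have h2 := slide_lem (M22 * N * M11 - M21) Y hc p2a
    have h3 := step_lem (M22 * N * M11 - M21) (Y * M11) p1 h2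
    rw [Matrix.mul_assoc M22 Y M11]
    exact h3
  refine ⟨?_, ?_, ?_, ?_⟩
  · intro k
    match k with
    | 0 => exact goalLM21
    | (k + 1) =>
      exact goalLMYM (M12 ^ k)
        (fun a b i j => (commute_pow_entries (fun a' b' => hLM12 i j a' b') k a b).symm)
  · intro k
    match k with
    | 0 => exact rk
    | (k + 1) =>
      exact BD_lem (M12 ^ k) (fun x u => commute_pow_entries (fun a b => ra x u a b) k) rc ri
  · intro k hk
    match k with
    | 1 =>
      have hpart := goalLMYM N (fun a b i j => (hLN i j a b).symm)
      calc Rmat A q qi n₂ * kron (M22 * N * M11 - M21) (M22 * N * M11 - M21)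
          = Rmat A q qi n₂ * kron (M22 * N * M11 - M21) (M22 * N * M11) -
            Rmat A q qi n₂ * kron (M22 * N * M11 - M21) M21 := by
            rw [kron_sub_right, Matrix.mul_sub]
        _ = kron' (M22 * N * M11 - M21) (M22 * N * M11) * Rmat A q qi n₁ -
            kron' (M22 * N * M11 - M21) M21 * Rmat A q qi n₁ := by
            rw [hpart, goalLM21]
        _ = kron' (M22 * N * M11 - M21) (M22 * N * M11 - M21) * Rmat A q qi n₁ := by
            rw [kron'_sub_right, Matrix.sub_mul]
    | (k + 2) =>
      exact goalLMYM (N ^ (k + 2))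
        (fun a b i j => (commute_pow_entries (fun a' b' => hLN i j a' b') (k + 2) a b).symm)
  · intro k hk
    match k with
    | 1 => exact goalLM21
    | (k + 2) =>
      exact BD_lem (N ^ (k + 2))
        (fun x u => commute_pow_entries (fun a b => hcN x u a b) (k + 2)) rc ri
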